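/- arXiv:1607.04219 — 2 statements merged into one kernel-verified Lean document; each statement's English description precedes it below -/
import Mathlib

section
/- Let H_K and H_0 be Hilbert spaces with a continuous linear embedding E : H_K → H_0, and let Π be an orthogonal projector onto a closed subspace of H_K. Suppose there is ε > 0 such that ‖E(f − Πf)‖_0 ≤ ε‖f − Πf‖_K for all f ∈ H_K. Then for every f in the range of the adjoint E* , say f = E*(v) with v ∈ H_0, one has ‖E(f − Πf)‖_0 ≤ ε²‖v‖_0. -/
open scoped RealInnerProductSpace

/-- Abstract superconvergence (Theorem 2.1): if the standard error bound
`‖E(f - Πf)‖₀ ≤ ε ‖f - Πf‖_K` holds for all `f`, then for `f = E* v` in the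
range of the adjoint one gets the squared rate `‖E(f - Πf)‖₀ ≤ ε² ‖v‖₀`. -/
theorem abstract_superconvergence
    {HK H0 : Type*}
    [NormedAddCommGroup HK] [InnerProductSpace ℝ HK] [CompleteSpace HK]
    [NormedAddCommGroup H0] [InnerProductSpace ℝ H0] [CompleteSpace H0]
    (E : HK →L[ℝ] H0)
    (S : Submodule ℝ HK) [CompleteSpace S]
    (ε : ℝ) (hε : 0 ≤ ε)
    (hstd : ∀ f : HK,
      ‖E (f - (Submodule.orthogonalProjectionOnto S f : HK))‖ ≤ ε * ‖f - (Submodule.orthogonalProjectionOnto S f : HK)‖) :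
    ∀ v : H0,
      ‖E ((ContinuousLinearMap.adjoint E) v
        - (Submodule.orthogonalProjectionOnto S ((ContinuousLinearMap.adjoint E) v) : HK))‖
        ≤ ε ^ 2 * ‖v‖ := by
  intro v
  set f := (ContinuousLinearMap.adjoint E) v with hf
  set e := f - (Submodule.orthogonalProjectionOnto S f : HK) with he
  have horth : ⟪(Submodule.orthogonalProjectionOnto S f : HK), e⟫ = 0 := by
    have := Submodule.sub_starProjection_mem_orthogonal (K := S) f
    exact ((Submodule.mem_orthogonal S e).mp this _ (Submodule.orthogonalProjectionOnto S f).2)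
  have hinner : ⟪f, e⟫ = ‖e‖ ^ 2 := by
    have : f = e + (Submodule.orthogonalProjectionOnto S f : HK) := by simp [he]
    rw [this, inner_add_left, horth]
    simp [real_inner_self_eq_norm_sq, real_inner_comm]
  have hkey : ‖e‖ ^ 2 ≤ ‖v‖ * (ε * ‖e‖) := by
    rw [← hinner]
    have : ⟪f, e⟫ = ⟪v, E e⟫ := by
      rw [hf, ← ContinuousLinearMap.adjoint_inner_left]
    rw [this]
    calc ⟪v, E e⟫ ≤ ‖v‖ * ‖E e‖ := real_inner_le_norm v (E e)
      _ ≤ ‖v‖ * (ε * ‖e‖) := by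
          exact mul_le_mul_of_nonneg_left (hstd f) (norm_nonneg v)
  have hne : ‖e‖ ≤ ε * ‖v‖ := by
    rcases eq_or_lt_of_le (norm_nonneg e) with h | h
    · rw [← h]; positivity
    · have := hkey
      nlinarith
  calc ‖E e‖ ≤ ε * ‖e‖ := hstd f
    _ ≤ ε * (ε * ‖v‖) := mul_le_mul_of_nonneg_left hne hε
    _ = ε ^ 2 * ‖v‖ := by ring
end

section
/- Let H_K, H_0, H_Ω be Hilbert spaces, E0K : H_K → H_0 bounded linear, and let E0Ω : H_Ω → H_0, EΩ0 : H_0 → H_Ω be bounded linear maps satisfying (E0Ω f, E0Ω g)_0 = (f,g)_Ω for all f,g ∈ H_Ω and (f, E0Ω g)_0 = (EΩ0 f, g)_Ω for all f ∈ H_0, g ∈ H_Ω. Let Π be an orthogonal projector on H_K. Assume f ∈ H_K satisfies: (i) there is v ∈ H_0 with (f,g)_K = (v, E0K g)_0 for all g ∈ H_K; (ii) v = E0Ω(EΩ0 v); (iii) ‖EΩ0(E0K(f − Πf))‖_Ω ≤ ε‖f − Πf‖_K. Then ‖EΩ0(E0K(f − Πf))‖_Ω ≤ ε²‖v‖_0.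 -/
open scoped RealInnerProductSpace

/-- Localized superconvergence (Theorem 2.6): under the localization axioms on the
extension/restriction maps `E0Ω`, `EΩ0`, the convolution condition (i), the
localization condition (ii), and the partially localized standard error bound (iii),
one has `‖EΩ0(E0K(f - Πf))‖_Ω ≤ ε² ‖v‖₀`. -/
theorem localized_superconvergence
    {HK H0 HΩ : Type*}
    [NormedAddCommGroup HK] [InnerProductSpace ℝ HK] [CompleteSpace HK]
    [NormedAddCommGroup H0] [InnerProductSpace ℝ H0] [CompleteSpace H0]
    [NormedAddCommGroup HΩ] [InnerProductSpace ℝ HΩ] [CompleteSpace HΩ]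
    (E0K : HK →L[ℝ] H0) (E0Ω : HΩ →L[ℝ] H0) (EΩ0 : H0 →L[ℝ] HΩ)
    (hiso : ∀ f g : HΩ, ⟪E0Ω f, E0Ω g⟫ = ⟪f, g⟫)
    (hadj : ∀ (f : H0) (g : HΩ), ⟪f, E0Ω g⟫ = ⟪EΩ0 f, g⟫)
    (S : Submodule ℝ HK) [CompleteSpace S]
    (ε : ℝ) (hε : 0 ≤ ε)
    (f : HK) (v : H0)
    (hconv : ∀ g : HK, ⟪f, g⟫ = ⟪v, E0K g⟫)
    (hloc : v = E0Ω (EΩ0 v))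
    (hstd : ‖EΩ0 (E0K (f - (S.orthogonalProjection f : HK)))‖
      ≤ ε * ‖f - (S.orthogonalProjection f : HK)‖) :
    ‖EΩ0 (E0K (f - (S.orthogonalProjection f : HK)))‖ ≤ ε ^ 2 * ‖v‖ := by
  set e : HK := f - (S.orthogonalProjection f : HK) with he
  -- e ⊥ S
  have heS : e ∈ Sᗮ := Submodule.sub_starProjection_mem_orthogonal f
  have hfe : ⟪f, e⟫ = ‖e‖ ^ 2 := by
    have h1 : ⟪(S.orthogonalProjection f : HK), e⟫ = 0 := by
      rw [real_inner_comm]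
      exact (Submodule.mem_orthogonal' S e).mp heS _ (S.orthogonalProjection f).2
    have : f = (S.orthogonalProjection f : HK) + e := by rw [he]; abel
    rw [this, inner_add_left, h1, zero_add, real_inner_self_eq_norm_sq]
  -- ‖EΩ0 v‖ = ‖v‖
  have hEv : ‖EΩ0 v‖ = ‖v‖ := by
    have h2 : ‖EΩ0 v‖ ^ 2 = ‖v‖ ^ 2 := by
      have h := hiso (EΩ0 v) (EΩ0 v)
      rw [← hloc, real_inner_self_eq_norm_sq, real_inner_self_eq_norm_sq] at h
      linarith
    exact (sq_eq_sq₀ (norm_nonneg _) (norm_nonneg _)).mp h2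
  -- key: ‖e‖² = ⟪EΩ0 v, EΩ0 (E0K e)⟫
  have hkey : ‖e‖ ^ 2 = ⟪EΩ0 v, EΩ0 (E0K e)⟫ := by
    rw [← hfe, hconv e]
    conv_lhs => rw [hloc]
    rw [real_inner_comm, hadj (E0K e) (EΩ0 v), real_inner_comm]
  have h1 : ‖e‖ ^ 2 ≤ ‖v‖ * (ε * ‖e‖) := by
    calc ‖e‖ ^ 2 = ⟪EΩ0 v, EΩ0 (E0K e)⟫ := hkey
      _ ≤ ‖EΩ0 v‖ * ‖EΩ0 (E0K e)‖ := real_inner_le_norm _ _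
      _ ≤ ‖v‖ * (ε * ‖e‖) := by rw [hEv]; exact mul_le_mul_of_nonneg_left hstd (norm_nonneg v)
  have he2 : ‖e‖ ≤ ε * ‖v‖ := by
    rcases eq_or_lt_of_le (norm_nonneg e) with h | h
    · rw [← h]; positivity
    · nlinarith
  calc ‖EΩ0 (E0K e)‖ ≤ ε * ‖e‖ := hstd
    _ ≤ ε * (ε * ‖v‖) := mul_le_mul_of_nonneg_left he2 hε
    _ = ε ^ 2 * ‖v‖ := by ring
end
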